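/- Let R̂(z) = (2/(iz))·(e^{iz}−1)/(e^{iz}+1) = (2/z)·tan(z/2), regarded as a formal power series in z² with rational coefficients (R̂(z) = 1 + z²/12 + ⋯). Then the formal power series T̂(z) = √(R̂(z)) (the unique power series with constant term 1 whose square is R̂) satisfies the ordinary differential equation dT̂/dz = (1/z)·(−1/2 + (1/2)R̂^{−1} + (z²/8)·R̂)·T̂. -/

import Mathlib

open PowerSeries

/-- let `t = tan(z/2) ∈ ℚ[[z]]` (characterized by `t(0) = 0`,
`t' = (1 + t²)/2`), `R̂ = (2/z)·t` (so `z·R̂ = 2t`, `R̂(0) = 1`) and `T̂ = √R̂`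
(the unique square root with constant term 1). Then
`dT̂/dz = (1/z)·(−1/2 + (1/2)R̂⁻¹ + (z²/8)R̂)·T̂`, stated after multiplying by `z`. -/
theorem sqrt_R_ode (t R T : PowerSeries ℚ)
    (ht0 : constantCoeff t = 0)
    (ht : PowerSeries.derivative ℚ t = C (1 / 2) * (1 + t ^ 2))
    (hR : X * R = C 2 * t)
    (hR0 : constantCoeff R = 1)
    (hT : T ^ 2 = R)
    (hT0 : constantCoeff T = 1) :
    X * PowerSeries.derivative ℚ T =
      (C (-(1 / 2)) + C (1 / 2) * R⁻¹ + C (1 / 8) * X ^ 2 * R) * T := by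
  have hTne : T ≠ 0 := by
    intro h
    rw [h, map_zero] at hT0
    exact one_ne_zero (α := ℚ) hT0.symm
  have hRinv : R⁻¹ * R = 1 :=
    PowerSeries.inv_mul_cancel R (by rw [hR0]; norm_num)
  -- derivative of T^2 = R
  have hdT : 2 * T * PowerSeries.derivative ℚ T = PowerSeries.derivative ℚ R := by
    rw [← hT]
    have h := Derivation.leibniz (PowerSeries.derivative ℚ) T T
    rw [← pow_two] at h
    rw [h]
    simp only [smul_eq_mul]
    ring
  -- derivative of X * R = 2 t
  have hdR : R + X * PowerSeries.derivative ℚ R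
      = C 2 * (C (1/2) * (1 + t ^ 2)) := by
    have h := congrArg (PowerSeries.derivative ℚ) hR
    rw [Derivation.leibniz, Derivation.leibniz] at h
    simpa [smul_eq_mul, ht, mul_comm, add_comm] using h
  -- constant arithmetic
  have hc2 : (C 2 : PowerSeries ℚ) = 2 := map_ofNat C 2
  have hc8 : (C 8 : PowerSeries ℚ) = 8 := map_ofNat C 8
  have ha : (C (1/2) : PowerSeries ℚ) * 2 = 1 := by
    rw [← hc2, ← map_mul]; norm_num
  have hb : (C (1/8) : PowerSeries ℚ) * 8 = 1 := by
    rw [← hc8, ← map_mul]; norm_num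
  rw [hc2] at hdR hR
  have hcneg : (C (-(1/2)) : PowerSeries ℚ) = - C (1/2) := by rw [map_neg]
  -- z R' = 1 - R + (1/4) z^2 R^2
  have hXR' : X * PowerSeries.derivative ℚ R
      = 1 - R + C (1/8) * 2 * X ^ 2 * R ^ 2 := by
    linear_combination hdR + ha - 2 * C (1/8) * (X * R + 2 * t) * hR
      + t^2 * ha - t^2 * hb
  apply mul_right_cancel₀ hTne
  linear_combination (C (1/2) * X) * hdT + C (1/2) * hXR'
    + (C (1/8) * X^2 * R^2 - X * T * PowerSeries.derivative ℚ T) * ha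
    - (C (-(1/2)) + C (1/2) * R⁻¹ + C (1/8) * X^2 * R) * hT
    - C (1/2) * hRinv - R * hcneg
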